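/- Let Ω ⊂ ℙ¹ be a circled domain with complementary closed discs Δ̄_j (j ∈ ℕ), and let C ⊂ ℙ¹ be any compact set. Then the union of all the discs Δ̄_j that intersect C is a closed subset of ℙ¹ (and it is a union of connected components of ℙ¹ \ Ω). -/

import Mathlib

open Complex Metric Set Filter Topology OnePoint

noncomputable section

open scoped Classical in
/-- The chart `z ↦ 1/z` (inverted) around `∞` on the Riemann sphere `ℙ¹ = ℂ ∪ {∞}`,
viewed as a parametrization `ℂ → ℙ¹` sending `0` to `∞`. -/
def invChart (z : ℂ) : OnePoint ℂ := if z = 0 then ∞ else ((z⁻¹ : ℂ) : OnePoint ℂ)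

/-- `f` is a holomorphic immersion on the open set `Ω ⊆ ℙ¹`: in each of the two standard
charts of the Riemann sphere it is analytic with nonvanishing derivative. -/
def SphHolImmersionOn (f : OnePoint ℂ → ℂ × ℂ) (Ω : Set (OnePoint ℂ)) : Prop :=
  (∀ z : ℂ, (z : OnePoint ℂ) ∈ Ω →
      AnalyticAt ℂ (fun w : ℂ => f (w : OnePoint ℂ)) z ∧
      deriv (fun w : ℂ => f (w : OnePoint ℂ)) z ≠ 0) ∧
  (∞ ∈ Ω →
      AnalyticAt ℂ (fun w : ℂ => f (invChart w)) 0 ∧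
      deriv (fun w : ℂ => f (invChart w)) 0 ≠ 0)

/-- A proper holomorphic embedding of `Ω ⊆ ℙ¹` into `ℂ²`: an injective proper
holomorphic immersion `Ω → ℂ²`. -/
def ProperHolomorphicEmbedding (Ω : Set (OnePoint ℂ)) (f : OnePoint ℂ → ℂ × ℂ) : Prop :=
  Set.InjOn f Ω ∧ SphHolImmersionOn f Ω ∧
  ∀ K : Set (ℂ × ℂ), IsCompact K → IsCompact {x ∈ Ω | f x ∈ K}

/-- A closed round disc of positive radius on the Riemann sphere: under stereographic
projection these are the closed metric discs, the complements of open metric discs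
(round discs containing `∞` in the interior), and closed half-planes together with `∞`
(round discs with `∞` on the boundary). -/
def IsRoundDisc (D : Set (OnePoint ℂ)) : Prop :=
  (∃ (c : ℂ) (r : ℝ), 0 < r ∧ D = (fun z : ℂ => (z : OnePoint ℂ)) '' Metric.closedBall c r) ∨
  (∃ (c : ℂ) (r : ℝ), 0 < r ∧
      D = insert ∞ ((fun z : ℂ => (z : OnePoint ℂ)) '' (Metric.ball c r)ᶜ)) ∨
  (∃ (a : ℂ) (t : ℝ), a ≠ 0 ∧
      D = insert ∞ ((fun z : ℂ => (z : OnePoint ℂ)) '' {z : ℂ | t ≤ (starRingEnd ℂ a * z).re}))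

/-- A circled domain in `ℙ¹`: a domain (connected open set) whose complement is nonempty
and is a union of pairwise disjoint closed round discs of positive radii. -/
def IsCircledDomain (Ω : Set (OnePoint ℂ)) : Prop :=
  IsOpen Ω ∧ IsConnected Ω ∧ Ωᶜ.Nonempty ∧
  ∃ (ι : Type) (Δ : ι → Set (OnePoint ℂ)), (∀ i, IsRoundDisc (Δ i)) ∧
    Pairwise (Function.onFun Disjoint Δ) ∧ (⋃ i, Δ i) = Ωᶜ


section AuxCD
open Set Metric MeasureTheory
open scoped ENNReal NNReal


/-- connectedComponentIn of a closed set is closed. -/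
lemma auxCD_isClosed_connectedComponentIn {X : Type*} [TopologicalSpace X] {F : Set X}
    (hF : IsClosed F) (x : X) : IsClosed (connectedComponentIn F x) := by
  by_cases hx : x ∈ F
  · rw [connectedComponentIn_eq_image hx]
    exact (hF.isClosedEmbedding_subtypeVal.isClosedMap _ isClosed_connectedComponent)
  · rw [connectedComponentIn_eq_empty hx]; exact isClosed_empty

/-- Boundary bumping lemma. -/
lemma auxCD_bb {X : Type*} [TopologicalSpace X] [CompactSpace X] [T2Space X]
    [PreconnectedSpace X] {A : Set X} (hA : IsClosed A) (hAne : A ≠ univ) {x : X}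
    (hx : x ∈ A) : (connectedComponentIn A x ∩ frontier A).Nonempty := by
  haveI : CompactSpace ↥A := isCompact_iff_compactSpace.mp hA.isCompact
  set Fr : Set ↥A := Subtype.val ⁻¹' frontier A with hFr
  set x' : ↥A := ⟨x, hx⟩ with hx'
  have key : ∀ Z : Set ↥A, IsClopen Z → x' ∈ Z → (Z ∩ Fr).Nonempty := by
    intro Z hZ hxZ
    by_contra h
    rw [not_nonempty_iff_eq_empty] at h
    set V : Set X := Subtype.val '' Z with hV
    have hVc : IsClosed V := (hZ.isClosed.isCompact.image continuous_subtype_val).isClosed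
    have hVint : V ⊆ interior A := by
      rintro v ⟨z, hzZ, rfl⟩
      have h1 : (z : X) ∈ A := z.2
      have h2 : (z : X) ∉ frontier A := by
        intro hf
        exact absurd h (Set.Nonempty.ne_empty ⟨z, hzZ, hf⟩)
      rw [hA.frontier_eq] at h2
      simp only [mem_diff, not_and, not_not] at h2
      exact h2 h1
    have hVo : IsOpen V := by
      obtain ⟨O, hO, hOZ⟩ := isOpen_induced_iff.mp hZ.isOpen
      have hVeq : V = O ∩ interior A := by
        apply Subset.antisymm
        · intro v hv
          refine ⟨?_, hVint hv⟩
          obtain ⟨z, hzZ, rfl⟩ := hv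
          rw [← hOZ] at hzZ; exact hzZ
        · intro v hv
          exact ⟨⟨v, interior_subset hv.2⟩, by rw [← hOZ]; exact hv.1, rfl⟩
      rw [hVeq]; exact hO.inter isOpen_interior
    rcases isClopen_iff.mp ⟨hVc, hVo⟩ with h0 | h1
    · exact absurd h0 (Set.Nonempty.ne_empty ⟨x, ⟨x', hxZ, rfl⟩⟩)
    · refine hAne (Subset.antisymm (subset_univ A) ?_)
      rw [← h1]
      exact (image_subset_range _ _).trans (by rw [Subtype.range_coe])
  have hFrC : IsClosed Fr := (isClosed_frontier).preimage continuous_subtype_val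
  set t : {Z : Set ↥A // IsClopen Z ∧ x' ∈ Z} → Set ↥A := fun Z => Z.1 ∩ Fr with ht
  haveI : Nonempty {Z : Set ↥A // IsClopen Z ∧ x' ∈ Z} := ⟨⟨univ, isClopen_univ, mem_univ _⟩⟩
  have hdir : Directed (· ⊇ ·) t := by
    intro Z1 Z2
    exact ⟨⟨Z1.1 ∩ Z2.1, Z1.2.1.inter Z2.2.1, ⟨Z1.2.2, Z2.2.2⟩⟩,
      inter_subset_inter_left _ inter_subset_left,
      inter_subset_inter_left _ inter_subset_right⟩
  have hne : ∀ Z, (t Z).Nonempty := fun Z => key Z.1 Z.2.1 Z.2.2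
  have hcl : ∀ Z, IsClosed (t Z) := fun Z => Z.2.1.isClosed.inter hFrC
  obtain ⟨y, hy⟩ := IsCompact.nonempty_iInter_of_directed_nonempty_isCompact_isClosed t hdir hne
    (fun Z => (hcl Z).isCompact) hcl
  simp only [mem_iInter] at hy
  have hycc : y ∈ connectedComponent x' := by
    rw [connectedComponent_eq_iInter_isClopen x']
    exact mem_iInter.mpr fun Z => (hy Z).1
  have hyFr : y ∈ t ⟨univ, isClopen_univ, mem_univ _⟩ := hy _
  refine ⟨y.1, ?_, hyFr.2⟩
  rw [connectedComponentIn_eq_image hx]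
  exact ⟨y, hycc, rfl⟩


lemma auxCD_step {X : Type*} [TopologicalSpace X] [CompactSpace X] [T2Space X]
    (F : ℕ → Set X) (hF : ∀ n, IsClosed (F n)) (hd : Pairwise (Function.onFun Disjoint F))
    (hcov : (⋃ n, F n) = univ) {Y : Set X} (hYc : IsClosed Y) (hYconn : IsPreconnected Y)
    (hY2 : ∃ a b, a ≠ b ∧ (Y ∩ F a).Nonempty ∧ (Y ∩ F b).Nonempty) (n : ℕ) :
    ∃ Y', Y' ⊆ Y ∧ IsClosed Y' ∧ IsPreconnected Y' ∧ Y' ∩ F n = ∅ ∧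
      ∃ a b, a ≠ b ∧ (Y' ∩ F a).Nonempty ∧ (Y' ∩ F b).Nonempty := by
  rcases (Y ∩ F n).eq_empty_or_nonempty with hYn | hYn
  · exact ⟨Y, Subset.rfl, hYc, hYconn, hYn, hY2⟩
  obtain ⟨a, b, hab, ha, hb⟩ := hY2
  -- pick m ≠ n with (Y ∩ F m).Nonempty
  obtain ⟨m, hmn, hm⟩ : ∃ m, m ≠ n ∧ (Y ∩ F m).Nonempty := by
    by_cases han : a = n
    · exact ⟨b, by rw [← han]; exact fun h => hab h.symm, hb⟩
    · exact ⟨a, han, ha⟩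
  haveI : CompactSpace ↥Y := isCompact_iff_compactSpace.mp hYc.isCompact
  haveI : PreconnectedSpace ↥Y := Subtype.preconnectedSpace hYconn
  set An : Set ↥Y := Subtype.val ⁻¹' (F n) with hAn
  set Bm : Set ↥Y := Subtype.val ⁻¹' (F m) with hBm
  have hAnc : IsClosed An := (hF n).preimage continuous_subtype_val
  have hBmc : IsClosed Bm := (hF m).preimage continuous_subtype_val
  have hABd : Disjoint An Bm := (hd (fun h => hmn h.symm)).preimage _
  obtain ⟨U, V, hUo, hVo, hAU, hBV, hUV⟩ := normal_separation hAnc hBmc hABd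
  obtain ⟨q0, hq0Y, hq0m⟩ := hm
  set q : ↥Y := ⟨q0, hq0Y⟩ with hq
  have hqB : q ∈ Bm := hq0m
  have hqU : q ∈ Uᶜ := fun hqU => (disjoint_left.mp hUV hqU) (hBV hqB)
  have hUcne : Uᶜ ≠ univ := by
    obtain ⟨p0, hp0Y, hp0n⟩ := hYn
    intro h
    have : (⟨p0, hp0Y⟩ : ↥Y) ∈ Uᶜ := h ▸ mem_univ _
    exact this (hAU hp0n)
  obtain ⟨z, hzC, hzFr⟩ := auxCD_bb (X := ↥Y) hUo.isClosed_compl hUcne hqU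
  set Cq : Set ↥Y := connectedComponentIn Uᶜ q with hCq
  refine ⟨Subtype.val '' Cq, ?_, ?_, ?_, ?_, ?_⟩
  · rintro v ⟨z, _, rfl⟩; exact z.2
  · exact hYc.isClosedEmbedding_subtypeVal.isClosedMap _
      (auxCD_isClosed_connectedComponentIn hUo.isClosed_compl q)
  · exact isPreconnected_connectedComponentIn.image _ continuous_subtype_val.continuousOn
  · rw [eq_empty_iff_forall_notMem]
    rintro v ⟨⟨w, hwC, rfl⟩, hvn⟩
    exact (connectedComponentIn_subset _ _ hwC) (hAU hvn)
  · -- the two indices: m (via q) and the index of z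
    have hzY : (z : X) ∈ ⋃ i, F i := hcov ▸ mem_univ _
    obtain ⟨p, hzp⟩ := mem_iUnion.mp hzY
    have hzU : z ∈ closure U := by
      have := hzFr
      rw [frontier_compl, hUo.frontier_eq] at this
      exact this.1
    have hpm : p ≠ m := by
      intro h
      have hzB : z ∈ Bm := by rw [hBm, ← h]; exact hzp
      have : Disjoint V (closure U) := hUV.symm.closure_right hVo
      exact (disjoint_left.mp this (hBV hzB)) hzU
    refine ⟨p, m, hpm, ⟨z, ⟨z, hzC, rfl⟩, hzp⟩, ⟨q, ⟨q, ?_, rfl⟩, hqB⟩⟩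
    exact mem_connectedComponentIn hqU

lemma auxCD_sierpinski {X : Type*} [TopologicalSpace X] [CompactSpace X] [T2Space X]
    [PreconnectedSpace X]
    (F : ℕ → Set X) (hF : ∀ n, IsClosed (F n)) (hd : Pairwise (Function.onFun Disjoint F))
    (hcov : (⋃ n, F n) = univ) {a b : ℕ} (ha : (F a).Nonempty) (hb : (F b).Nonempty) :
    a = b := by
  by_contra hab
  set P : Set X → Prop := fun Y => IsClosed Y ∧ IsPreconnected Y ∧
    ∃ a b, a ≠ b ∧ (Y ∩ F a).Nonempty ∧ (Y ∩ F b).Nonempty with hP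
  have h0 : P univ := ⟨isClosed_univ, isPreconnected_univ, a, b, hab,
    by simpa using ha, by simpa using hb⟩
  have step : ∀ (k : ℕ) (Y : Set X), P Y → {Y' : Set X // P Y' ∧ Y' ⊆ Y ∧ Y' ∩ F k = ∅} := by
    intro k Y hY
    have h := auxCD_step F hF hd hcov hY.1 hY.2.1 hY.2.2 k
    exact ⟨h.choose, ⟨h.choose_spec.2.1, h.choose_spec.2.2.1, h.choose_spec.2.2.2.2⟩,
      h.choose_spec.1, h.choose_spec.2.2.2.1⟩
  let g : ℕ → {Y : Set X // P Y} := fun k =>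
    Nat.rec ⟨univ, h0⟩ (fun k ih => ⟨(step k ih.1 ih.2).1, (step k ih.1 ih.2).2.1⟩) k
  have hg1 : ∀ k, (g (k + 1)).1 ⊆ (g k).1 := fun k => (step k (g k).1 (g k).2).2.2.1
  have hg2 : ∀ k, (g (k + 1)).1 ∩ F k = ∅ := fun k => (step k (g k).1 (g k).2).2.2.2
  have hgne : ∀ k, (g k).1.Nonempty := by
    intro k
    obtain ⟨a', b', _, hA, _⟩ := (g k).2.2.2
    exact ⟨hA.some, hA.some_mem.1⟩
  obtain ⟨z, hz⟩ := IsCompact.nonempty_iInter_of_sequence_nonempty_isCompact_isClosed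
    (fun k => (g k).1) hg1 hgne ((g 0).2.1.isCompact) (fun k => (g k).2.1)
  have hzU : z ∈ ⋃ i, F i := hcov ▸ mem_univ _
  obtain ⟨i, hzi⟩ := mem_iUnion.mp hzU
  have : z ∈ (g (i + 1)).1 := mem_iInter.mp hz (i + 1)
  exact eq_empty_iff_forall_notMem.mp (hg2 i) z ⟨this, hzi⟩

lemma auxCD_finite_discs (c : ℕ → ℂ) (r : ℕ → ℝ) {ρ L : ℝ} (hρ : 0 < ρ) (hL : 0 ≤ L)
    {J : Set ℕ}
    (hd : ∀ i ∈ J, ∀ j ∈ J, i ≠ j →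
      Disjoint (closedBall (c i) (r i)) (closedBall (c j) (r j)))
    (hr : ∀ j ∈ J, ρ ≤ r j) (x : ℂ)
    (hm : ∀ j ∈ J, (closedBall (c j) (r j) ∩ closedBall x L).Nonempty) :
    J.Finite := by
  by_contra hinf
  have hJ : J.Infinite := hinf
  haveI := hJ.to_subtype
  choose! p hp using hm
  set q : ℕ → ℂ := fun j => if dist (p j) (c j) ≤ ρ / 2 then c j
    else p j + ((ρ / 2) / dist (p j) (c j)) • (c j - p j) with hq
  have key : ∀ j ∈ J, ball (q j) (ρ / 2) ⊆ closedBall (c j) (r j) ∧ dist (q j) x ≤ L + ρ := by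
    intro j hj
    have hpc : p j ∈ closedBall (c j) (r j) := (hp j hj).1
    have hpx : dist (p j) x ≤ L := (hp j hj).2
    have hrj : ρ ≤ r j := hr j hj
    by_cases hcase : dist (p j) (c j) ≤ ρ / 2
    · have hqj : q j = c j := if_pos hcase
      constructor
      · intro w hw
        rw [mem_closedBall]
        rw [hqj] at hw
        calc dist w (c j) ≤ ρ / 2 := le_of_lt hw
        _ ≤ r j := by linarith
      · rw [hqj]
        calc dist (c j) x ≤ dist (c j) (p j) + dist (p j) x := dist_triangle _ _ _
        _ ≤ ρ / 2 + L := by rw [dist_comm]; exact add_le_add hcase hpx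
        _ ≤ L + ρ := by linarith
    · push_neg at hcase
      set D : ℝ := dist (p j) (c j) with hD
      have hD0 : 0 < D := lt_trans (by positivity) hcase
      set t : ℝ := (ρ / 2) / D with htdef
      have ht0 : 0 < t := by positivity
      have ht1 : t ≤ 1 := by
        rw [htdef, div_le_one hD0]; exact le_of_lt hcase
      have htD : t * D = ρ / 2 := div_mul_cancel₀ _ (ne_of_gt hD0)
      have hqj : q j = p j + t • (c j - p j) := if_neg (not_le.mpr hcase)
      have hqc : dist (q j) (c j) = D - ρ / 2 := by
        rw [hqj, dist_eq_norm]
        have heq : p j + t • (c j - p j) - c j = ((1 - t : ℝ) : ℂ) * (p j - c j) := by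
          rw [Complex.real_smul]
          push_cast
          ring
        rw [heq, norm_mul, Complex.norm_real, Real.norm_eq_abs, _root_.abs_of_nonneg (by linarith)]
        have : ‖p j - c j‖ = D := by rw [hD, dist_eq_norm]
        rw [this]
        nlinarith
      have hqp : dist (q j) (p j) = ρ / 2 := by
        rw [hqj, dist_eq_norm]
        have heq : p j + t • (c j - p j) - p j = (t : ℂ) * (c j - p j) := by
          rw [Complex.real_smul]; ring
        rw [heq, norm_mul, Complex.norm_real, Real.norm_eq_abs, _root_.abs_of_nonneg (le_of_lt ht0)]
        have : ‖c j - p j‖ = D := by rw [hD, dist_comm, dist_eq_norm]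
        rw [this, htD]
      constructor
      · intro w hw
        rw [mem_ball] at hw
        rw [mem_closedBall]
        have hDr : D ≤ r j := mem_closedBall.mp hpc
        calc dist w (c j) ≤ dist w (q j) + dist (q j) (c j) := dist_triangle _ _ _
        _ ≤ ρ / 2 + (D - ρ / 2) := by rw [hqc]; linarith
        _ = D := by ring
        _ ≤ r j := hDr
      · calc dist (q j) x ≤ dist (q j) (p j) + dist (p j) x := dist_triangle _ _ _
        _ ≤ ρ / 2 + L := by rw [hqp]; linarith
        _ ≤ L + ρ := by linarith
  -- measure-theoretic contradiction
  have hdisj : Pairwise (Function.onFun Disjoint (fun j : ↥J => ball (q j) (ρ / 2))) := by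
    intro i j hij
    have : Disjoint (closedBall (c i) (r i)) (closedBall (c j) (r j)) :=
      hd i i.2 j j.2 (fun h => hij (Subtype.ext h))
    exact this.mono (key i i.2).1 (key j j.2).1
  have hsub : (⋃ j : ↥J, ball (q j) (ρ / 2)) ⊆ closedBall x (L + 2 * ρ) := by
    rintro w hw
    obtain ⟨j, hwj⟩ := mem_iUnion.mp hw
    rw [mem_closedBall]
    calc dist w x ≤ dist w (q j) + dist (q j) x := dist_triangle _ _ _
    _ ≤ ρ / 2 + (L + ρ) := add_le_add (le_of_lt (mem_ball.mp hwj)) (key j j.2).2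
    _ ≤ L + 2 * ρ := by linarith
  have hvol : volume (⋃ j : ↥J, ball (q j) (ρ / 2)) = ∑' (_ : ↥J),
      (ENNReal.ofReal (ρ / 2) ^ 2 * NNReal.pi) := by
    rw [measure_iUnion hdisj (fun j => measurableSet_ball)]
    simp [Complex.volume_ball]
  have htop : (∑' (_ : ↥J), (ENNReal.ofReal (ρ / 2) ^ 2 * (NNReal.pi : ℝ≥0∞))) = ⊤ := by
    apply ENNReal.tsum_const_eq_top_of_ne_zero
    apply mul_ne_zero
    · exact pow_ne_zero _ (ne_of_gt (ENNReal.ofReal_pos.mpr (by positivity)))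
    · simp only [ne_eq, ENNReal.coe_eq_zero]
      exact fun h => Real.pi_ne_zero (by have := congrArg NNReal.toReal h; simpa using this)
  have hle : volume (⋃ j : ↥J, ball (q j) (ρ / 2)) ≤ volume (closedBall x (L + 2 * ρ)) :=
    measure_mono hsub
  rw [hvol, htop, top_le_iff] at hle
  rw [Complex.volume_closedBall] at hle
  exact (ENNReal.mul_ne_top (ENNReal.pow_ne_top ENNReal.ofReal_ne_top) ENNReal.coe_ne_top) hle

end AuxCD

section AuxCD2
open Metric


lemma auxCD_preimage_insert_image (s : Set ℂ) :
    ((fun z : ℂ => (z : OnePoint ℂ)) ⁻¹' (insert ∞ ((fun z : ℂ => (z : OnePoint ℂ)) '' s))) = s := by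
  ext z
  simp only [mem_preimage, mem_insert_iff, mem_image]
  constructor
  · rintro (h | ⟨w, hw, hwz⟩)
    · exact absurd h (OnePoint.coe_ne_infty z)
    · rwa [← OnePoint.coe_injective hwz]
  · intro h; exact Or.inr ⟨z, h, rfl⟩

lemma auxCD_disc_isClosed {D : Set (OnePoint ℂ)} (h : IsRoundDisc D) : IsClosed D := by
  rcases h with ⟨c, r, _, rfl⟩ | ⟨c, r, _, rfl⟩ | ⟨a, t, _, rfl⟩
  · exact OnePoint.isClosed_image_coe.mpr ⟨Metric.isClosed_closedBall, isCompact_closedBall c r⟩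
  · rw [OnePoint.isClosed_iff_of_mem (mem_insert _ _), auxCD_preimage_insert_image]
    exact isOpen_ball.isClosed_compl
  · rw [OnePoint.isClosed_iff_of_mem (mem_insert _ _), auxCD_preimage_insert_image]
    have : {z : ℂ | t ≤ (starRingEnd ℂ a * z).re} =
        (fun z : ℂ => (starRingEnd ℂ a * z).re) ⁻¹' (Ici t) := rfl
    rw [this]
    exact isClosed_Ici.preimage (Complex.continuous_re.comp (continuous_const.mul continuous_id))

lemma auxCD_disc_cases {D : Set (OnePoint ℂ)} (h : IsRoundDisc D) :
    ∞ ∈ D ∨ ∃ c r, 0 < r ∧ D = (fun z : ℂ => (z : OnePoint ℂ)) '' Metric.closedBall c r := by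
  rcases h with ⟨c, r, hr, rfl⟩ | ⟨c, r, _, rfl⟩ | ⟨a, t, _, rfl⟩
  · exact Or.inr ⟨c, r, hr, rfl⟩
  · exact Or.inl (mem_insert _ _)
  · exact Or.inl (mem_insert _ _)

end AuxCD2

lemma auxCD_case_infty
    (Δ : ℕ → Set (OnePoint ℂ)) (hΔcl : ∀ j, IsClosed (Δ j))
    (hmem_unique : ∀ {w : OnePoint ℂ} {i j : ℕ}, w ∈ Δ i → w ∈ Δ j → i = j)
    (c : ℕ → ℂ) (r : ℕ → ℝ) (hrpos : ∀ j, ∞ ∉ Δ j → 0 < r j)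
    (hΔeq : ∀ j, ∞ ∉ Δ j → Δ j = (fun z : ℂ => (z : OnePoint ℂ)) '' Metric.closedBall (c j) (r j))
    (hballdisj : ∀ i j : ℕ, i ≠ j → ∞ ∉ Δ i → ∞ ∉ Δ j →
      Disjoint (Metric.closedBall (c i) (r i)) (Metric.closedBall (c j) (r j)))
    (hmemball : ∀ (j : ℕ) (h : ∞ ∉ Δ j) (z : ℂ), ((z : OnePoint ℂ) ∈ Δ j ↔
      z ∈ Metric.closedBall (c j) (r j)))
    (C : Set (OnePoint ℂ)) (hC : IsCompact C) {k : ℕ}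
    (hk : (∞ : OnePoint ℂ) ∈ Δ k) (hkS : k ∉ {j : ℕ | (Δ j ∩ C).Nonempty})
    (hy : (∞ : OnePoint ℂ) ∈ closure (⋃ j ∈ {j : ℕ | (Δ j ∩ C).Nonempty}, Δ j)) : False := by
  set S := {j : ℕ | (Δ j ∩ C).Nonempty} with hSdef
  have hinftyC : (∞ : OnePoint ℂ) ∉ C := fun h => hkS ⟨∞, hk, h⟩
  have hSnoinf : ∀ j ∈ S, (∞ : OnePoint ℂ) ∉ Δ j := by
    intro j hjS hj
    exact hkS (by rwa [hmem_unique hj hk] at hjS)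
  obtain ⟨M, hM0, hMC⟩ : ∃ M : ℝ, 0 ≤ M ∧ ∀ g : ℂ, (g : OnePoint ℂ) ∈ C → ‖g‖ ≤ M := by
    have hcover : C ⊆ ⋃ n : ℕ, (fun z : ℂ => (z : OnePoint ℂ)) '' Metric.ball 0 n := by
      intro w hw
      induction w using OnePoint.rec with
      | infty => exact absurd hw hinftyC
      | coe g =>
        refine mem_iUnion.mpr ⟨⌊‖g‖⌋₊ + 1, ⟨g, ?_, rfl⟩⟩
        rw [Metric.mem_ball, dist_zero_right]
        push_cast
        exact Nat.lt_floor_add_one _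
    obtain ⟨t, ht⟩ := hC.elim_finite_subcover _
      (fun n : ℕ => OnePoint.isOpenMap_coe _ Metric.isOpen_ball) hcover
    refine ⟨((t.sup id : ℕ) : ℝ), Nat.cast_nonneg _, ?_⟩
    intro g hg
    obtain ⟨n, hnt, hgn⟩ := mem_iUnion₂.mp (ht hg)
    obtain ⟨w, hw, hwg⟩ := hgn
    rw [← OnePoint.coe_injective hwg]
    rw [Metric.mem_ball, dist_zero_right] at hw
    calc ‖w‖ ≤ (n : ℝ) := le_of_lt hw
    _ ≤ ((t.sup id : ℕ) : ℝ) := by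
        have h2 : n ≤ t.sup id := Finset.le_sup (f := id) hnt
        exact_mod_cast h2
  have hwit : ∀ j ∈ S, ∃ g : ℂ, g ∈ Metric.closedBall (c j) (r j) ∧ ‖g‖ ≤ M := by
    intro j hjS
    have hj : (∞ : OnePoint ℂ) ∉ Δ j := hSnoinf j hjS
    obtain ⟨w, hwΔ, hwC⟩ := hjS
    rw [hΔeq j hj] at hwΔ
    obtain ⟨g, hg, rfl⟩ := hwΔ
    exact ⟨g, hg, hMC g hwC⟩
  set J' := {j | j ∈ S ∧
      ¬ (Δ j ⊆ (fun z : ℂ => (z : OnePoint ℂ)) '' Metric.closedBall 0 (M + 2))} with hJ'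
  have hJ'fin : J'.Finite := by
    apply auxCD_finite_discs c r (ρ := 1) (L := M) one_pos hM0 ?_ ?_ 0 ?_
    · intro i hi j hj hij
      exact hballdisj i j hij (hSnoinf i hi.1) (hSnoinf j hj.1)
    · intro j hj
      obtain ⟨g, hg, hgM⟩ := hwit j hj.1
      obtain ⟨u, huΔ, hune⟩ := not_subset.mp hj.2
      have hjinf := hSnoinf j hj.1
      rw [hΔeq j hjinf] at huΔ
      obtain ⟨p, hp, rfl⟩ := huΔ
      have hpM : M + 2 < ‖p‖ := by
        by_contra h
        push_neg at h
        exact hune ⟨p, by simpa [Metric.mem_closedBall, dist_zero_right] using h, rfl⟩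
      have h1 : dist p g ≤ 2 * r j := by
        calc dist p g ≤ dist p (c j) + dist (c j) g := dist_triangle _ _ _
        _ ≤ r j + r j := add_le_add (Metric.mem_closedBall.mp hp)
          (by rw [dist_comm]; exact Metric.mem_closedBall.mp hg)
        _ = 2 * r j := by ring
      have h2 : 2 < dist p g := by
        calc (2 : ℝ) < ‖p‖ - ‖g‖ := by linarith
        _ ≤ ‖p - g‖ := norm_sub_norm_le _ _
        _ = dist p g := (dist_eq_norm _ _).symm
      linarith
    · intro j hj
      obtain ⟨g, hg, hgM⟩ := hwit j hj.1
      exact ⟨g, hg, by simpa [Metric.mem_closedBall, dist_zero_right] using hgM⟩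
  set K0 := ((fun z : ℂ => (z : OnePoint ℂ)) '' Metric.closedBall 0 (M + 2)) ∪
      ⋃ j ∈ J', Δ j with hK0
  have hK0cpt : IsCompact K0 :=
    ((isCompact_closedBall (0 : ℂ) (M + 2)).image OnePoint.continuous_coe).union
      (hJ'fin.isCompact_biUnion (fun j _ => (hΔcl j).isCompact))
  have hinfK0 : (∞ : OnePoint ℂ) ∉ K0 := by
    rintro (h | h)
    · exact OnePoint.infty_notMem_image_coe h
    · obtain ⟨j, hj, hjm⟩ := mem_iUnion₂.mp h
      exact hSnoinf j hj.1 hjm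
  have hnb : K0ᶜ ∈ 𝓝 (∞ : OnePoint ℂ) := hK0cpt.isClosed.isOpen_compl.mem_nhds hinfK0
  obtain ⟨u, huc, huU⟩ := mem_closure_iff_nhds.mp hy _ hnb
  obtain ⟨j, hjS, hju⟩ := mem_iUnion₂.mp huU
  apply huc
  by_cases hjJ : j ∈ J'
  · exact Or.inr (mem_biUnion hjJ hju)
  · have hsub : Δ j ⊆ (fun z : ℂ => (z : OnePoint ℂ)) '' Metric.closedBall 0 (M + 2) := by
      by_contra h
      exact hjJ ⟨hjS, h⟩
    exact Or.inl (hsub hju)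

lemma auxCD_case_coe
    (Δ : ℕ → Set (OnePoint ℂ)) (hΔcl : ∀ j, IsClosed (Δ j))
    (hmem_unique : ∀ {w : OnePoint ℂ} {i j : ℕ}, w ∈ Δ i → w ∈ Δ j → i = j)
    (c : ℕ → ℂ) (r : ℕ → ℝ) (hrpos : ∀ j, ∞ ∉ Δ j → 0 < r j)
    (hΔeq : ∀ j, ∞ ∉ Δ j → Δ j = (fun z : ℂ => (z : OnePoint ℂ)) '' Metric.closedBall (c j) (r j))
    (hballdisj : ∀ i j : ℕ, i ≠ j → ∞ ∉ Δ i → ∞ ∉ Δ j →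
      Disjoint (Metric.closedBall (c i) (r i)) (Metric.closedBall (c j) (r j)))
    (hmemball : ∀ (j : ℕ) (h : ∞ ∉ Δ j) (z : ℂ), ((z : OnePoint ℂ) ∈ Δ j ↔
      z ∈ Metric.closedBall (c j) (r j)))
    (C : Set (OnePoint ℂ)) (hC : IsCompact C) {k : ℕ} {x : ℂ}
    (hk : (x : OnePoint ℂ) ∈ Δ k) (hkS : k ∉ {j : ℕ | (Δ j ∩ C).Nonempty})
    (hy : (x : OnePoint ℂ) ∈ closure (⋃ j ∈ {j : ℕ | (Δ j ∩ C).Nonempty}, Δ j)) : False := by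
  set S := {j : ℕ | (Δ j ∩ C).Nonempty} with hSdef
  have hxC : (x : OnePoint ℂ) ∉ C := fun h => hkS ⟨_, hk, h⟩
  obtain ⟨ε0, hε0pos, hε0le, hε0⟩ : ∃ ε0 : ℝ, 0 < ε0 ∧ ε0 ≤ 1 ∧
      ∀ g : ℂ, g ∈ Metric.ball x ε0 → (g : OnePoint ℂ) ∉ C := by
    have h1 : Cᶜ ∈ 𝓝 ((x : OnePoint ℂ)) := hC.isClosed.isOpen_compl.mem_nhds hxC
    rw [← OnePoint.isOpenEmbedding_coe.map_nhds_eq x, mem_map] at h1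
    obtain ⟨ε, hεpos, hε⟩ := Metric.mem_nhds_iff.mp h1
    exact ⟨min ε 1, lt_min hεpos one_pos, min_le_right _ _,
      fun g hg => hε (Metric.ball_subset_ball (min_le_left _ _) hg)⟩
  set V := ⋃ j ∈ {j | j ∈ S ∧ (∞ : OnePoint ℂ) ∈ Δ j}, Δ j with hV
  have hSinffin : {j | j ∈ S ∧ (∞ : OnePoint ℂ) ∈ Δ j}.Finite := by
    apply Set.Subsingleton.finite
    intro i hi j hj
    exact hmem_unique hi.2 hj.2
  have hVcl : IsClosed V := hSinffin.isClosed_biUnion (fun j _ => hΔcl j)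
  have hxV : (x : OnePoint ℂ) ∉ V := by
    intro h
    obtain ⟨j, hj, hjm⟩ := mem_iUnion₂.mp h
    have hj1 := hj.1
    exact hkS (by rwa [hmem_unique hjm hk] at hj1)
  obtain ⟨ε2, hε2pos, hε2⟩ : ∃ ε2 : ℝ, 0 < ε2 ∧
      ∀ g : ℂ, g ∈ Metric.ball x ε2 → (g : OnePoint ℂ) ∉ V := by
    have h1 : Vᶜ ∈ 𝓝 ((x : OnePoint ℂ)) := hVcl.isOpen_compl.mem_nhds hxV
    rw [← OnePoint.isOpenEmbedding_coe.map_nhds_eq x, mem_map] at h1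
    obtain ⟨ε, hεpos, hε⟩ := Metric.mem_nhds_iff.mp h1
    exact ⟨ε, hεpos, fun g hg => hε hg⟩
  set Jf := {j | j ∈ S ∧ (∞ : OnePoint ℂ) ∉ Δ j ∧
      (Metric.closedBall (c j) (r j) ∩ Metric.ball x (ε0 / 2)).Nonempty} with hJf
  have hJffin : Jf.Finite := by
    apply auxCD_finite_discs c r (ρ := ε0 / 4) (L := 1) (by positivity) zero_le_one ?_ ?_ x ?_
    · intro i hi j hj hij
      exact hballdisj i j hij hi.2.1 hj.2.1
    · intro j hj
      have hjinf := hj.2.1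
      obtain ⟨w, hwΔ, hwC⟩ := hj.1
      rw [hΔeq j hjinf] at hwΔ
      obtain ⟨g, hg, rfl⟩ := hwΔ
      have hgx : ε0 ≤ dist g x := by
        by_contra h
        push_neg at h
        exact hε0 g (Metric.mem_ball.mpr h) hwC
      obtain ⟨p, hp1, hp2⟩ := hj.2.2
      have hpx : dist p x < ε0 / 2 := Metric.mem_ball.mp hp2
      have h1 : dist g p ≤ 2 * r j := by
        calc dist g p ≤ dist g (c j) + dist (c j) p := dist_triangle _ _ _
        _ ≤ r j + r j := add_le_add (Metric.mem_closedBall.mp hg)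
          (by rw [dist_comm]; exact Metric.mem_closedBall.mp hp1)
        _ = 2 * r j := by ring
      have h2 : ε0 / 2 ≤ dist g p := by
        have h3 := dist_triangle g p x
        linarith
      linarith
    · intro j hj
      obtain ⟨p, hp1, hp2⟩ := hj.2.2
      refine ⟨p, hp1, Metric.mem_closedBall.mpr ?_⟩
      have := Metric.mem_ball.mp hp2
      linarith
  set W := ⋃ j ∈ Jf, Metric.closedBall (c j) (r j) with hW
  have hWcl : IsClosed W := hJffin.isClosed_biUnion (fun j _ => Metric.isClosed_closedBall)
  have hxW : x ∉ W := by
    intro h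
    obtain ⟨j, hj, hjm⟩ := mem_iUnion₂.mp h
    have hxj : (x : OnePoint ℂ) ∈ Δ j := (hmemball j hj.2.1 x).mpr hjm
    have hj1 := hj.1
    exact hkS (by rwa [hmem_unique hxj hk] at hj1)
  obtain ⟨ε1, hε1pos, hε1⟩ := Metric.mem_nhds_iff.mp (hWcl.isOpen_compl.mem_nhds hxW)
  set ε := min (min ε1 ε2) (ε0 / 2) with hε
  have hεpos : 0 < ε := lt_min (lt_min hε1pos hε2pos) (by positivity)
  have hN : ((fun z : ℂ => (z : OnePoint ℂ)) '' Metric.ball x ε) ∈ 𝓝 ((x : OnePoint ℂ)) :=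
    (OnePoint.isOpenMap_coe _ Metric.isOpen_ball).mem_nhds ⟨x, Metric.mem_ball_self hεpos, rfl⟩
  obtain ⟨u, huN, huU⟩ := mem_closure_iff_nhds.mp hy _ hN
  obtain ⟨w, hw, rfl⟩ := huN
  obtain ⟨j, hjS, hju⟩ := mem_iUnion₂.mp huU
  by_cases hjinf : (∞ : OnePoint ℂ) ∈ Δ j
  · have hwV : (w : OnePoint ℂ) ∈ V := mem_biUnion (⟨hjS, hjinf⟩ :
      j ∈ {j | j ∈ S ∧ (∞ : OnePoint ℂ) ∈ Δ j}) hju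
    exact hε2 w (Metric.ball_subset_ball (le_trans (min_le_left _ _) (min_le_right _ _)) hw) hwV
  · have hwball : w ∈ Metric.closedBall (c j) (r j) := (hmemball j hjinf w).mp hju
    have hjJf : j ∈ Jf := ⟨hjS, hjinf,
      ⟨w, hwball, Metric.ball_subset_ball (min_le_right _ _) hw⟩⟩
    exact hε1 (Metric.ball_subset_ball (le_trans (min_le_left _ _) (min_le_left _ _)) hw)
      (mem_biUnion hjJf hwball)

/-- **Remark/Lemma.** Let `Ω ⊆ ℙ¹` be a circled domain with complementary closed round
discs `Δ j` (`j ∈ ℕ`), and let `C ⊆ ℙ¹` be a compact set. Then the union of all the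
discs `Δ j` meeting `C` is a closed set, and it is a union of connected components of
`ℙ¹ \ Ω`. -/
theorem union_of_discs_meeting_compact_is_closed
    (Ω : Set (OnePoint ℂ)) (hopen : IsOpen Ω) (hconn : IsConnected Ω)
    (Δ : ℕ → Set (OnePoint ℂ)) (hdisc : ∀ j, IsRoundDisc (Δ j))
    (hdisj : Pairwise (Function.onFun Disjoint Δ)) (hcompl : (⋃ j, Δ j) = Ωᶜ)
    (C : Set (OnePoint ℂ)) (hC : IsCompact C) :
    IsClosed (⋃ j ∈ {j : ℕ | (Δ j ∩ C).Nonempty}, Δ j) ∧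
    ∀ x ∈ ⋃ j ∈ {j : ℕ | (Δ j ∩ C).Nonempty}, Δ j,
      connectedComponentIn Ωᶜ x ⊆ ⋃ j ∈ {j : ℕ | (Δ j ∩ C).Nonempty}, Δ j := by
  classical
  set S := {j : ℕ | (Δ j ∩ C).Nonempty} with hSdef
  have hΔcl : ∀ j, IsClosed (Δ j) := fun j => auxCD_disc_isClosed (hdisc j)
  have hΩc : IsClosed Ωᶜ := hopen.isClosed_compl
  have hUsub : (⋃ j ∈ S, Δ j) ⊆ Ωᶜ := by
    intro u hu
    obtain ⟨j, -, hj⟩ := mem_iUnion₂.mp hu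
    exact hcompl ▸ mem_iUnion.mpr ⟨j, hj⟩
  have hmem_unique : ∀ {w : OnePoint ℂ} {i j : ℕ}, w ∈ Δ i → w ∈ Δ j → i = j := by
    intro w i j hi hj
    by_contra hij
    exact Set.disjoint_left.mp (hdisj hij) hi hj
  have hdata : ∀ j, ∞ ∉ Δ j → ∃ c r, 0 < r ∧
      Δ j = (fun z : ℂ => (z : OnePoint ℂ)) '' Metric.closedBall c r := by
    intro j h
    rcases auxCD_disc_cases (hdisc j) with h' | h'
    · exact absurd h' h
    · exact h'
  choose! c r hrpos hΔeq using hdata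
  have hballdisj : ∀ i j : ℕ, i ≠ j → ∞ ∉ Δ i → ∞ ∉ Δ j →
      Disjoint (Metric.closedBall (c i) (r i)) (Metric.closedBall (c j) (r j)) := by
    intro i j hij hi hj
    have := hdisj hij
    rw [Function.onFun, hΔeq i hi, hΔeq j hj] at this
    exact (Set.disjoint_image_iff OnePoint.coe_injective).mp this
  have hmemball : ∀ (j : ℕ) (h : ∞ ∉ Δ j) (z : ℂ), ((z : OnePoint ℂ) ∈ Δ j ↔
      z ∈ Metric.closedBall (c j) (r j)) := by
    intro j h z
    rw [hΔeq j h]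
    constructor
    · rintro ⟨w, hw, hwz⟩
      rwa [← OnePoint.coe_injective hwz]
    · intro hz; exact ⟨z, hz, rfl⟩
  have hclosed : IsClosed (⋃ j ∈ S, Δ j) := by
    apply isClosed_of_closure_subset
    intro y hy
    have hyΩc : y ∈ Ωᶜ := closure_minimal hUsub hΩc hy
    obtain ⟨k, hk⟩ : ∃ k, y ∈ Δ k := mem_iUnion.mp (hcompl ▸ hyΩc)
    suffices hkS : k ∈ S by exact mem_biUnion hkS hk
    by_contra hkS
    induction y using OnePoint.rec with
    | infty => exact (auxCD_case_infty Δ hΔcl hmem_unique c r hrpos hΔeq hballdisj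
        hmemball C hC hk hkS hy)
    | coe x => exact (auxCD_case_coe Δ hΔcl hmem_unique c r hrpos hΔeq hballdisj
        hmemball C hC hk hkS hy)
  refine ⟨hclosed, ?_⟩
  rintro x hx y hy
  obtain ⟨j, hjS, hxj⟩ := mem_iUnion₂.mp hx
  have hxΩc : x ∈ Ωᶜ := hUsub hx
  set K := connectedComponentIn Ωᶜ x with hK
  have hKcl : IsClosed K := auxCD_isClosed_connectedComponentIn hΩc x
  have hKconn : IsPreconnected K := isPreconnected_connectedComponentIn
  have hxK : x ∈ K := mem_connectedComponentIn hxΩc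
  have hKsub : K ⊆ Ωᶜ := connectedComponentIn_subset _ _
  obtain ⟨i, hyi⟩ : ∃ i, y ∈ Δ i := mem_iUnion.mp (hcompl ▸ hKsub hy)
  haveI : CompactSpace ↥K := isCompact_iff_compactSpace.mp hKcl.isCompact
  haveI : PreconnectedSpace ↥K := Subtype.preconnectedSpace hKconn
  have hij : i = j := by
    apply auxCD_sierpinski (X := ↥K) (fun n => Subtype.val ⁻¹' (Δ n))
      (fun n => (hΔcl n).preimage continuous_subtype_val)
      (fun a b hab => (hdisj hab).preimage _)
      ?_ ⟨⟨y, hy⟩, hyi⟩ ⟨⟨x, hxK⟩, hxj⟩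
    rw [eq_univ_iff_forall]
    intro z
    obtain ⟨n, hn⟩ := mem_iUnion.mp (hcompl ▸ hKsub z.2)
    exact mem_iUnion.mpr ⟨n, hn⟩
  exact mem_biUnion hjS (hij ▸ hyi)
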